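/- If every frontal slice of X ×₃ M is a symmetric N×N matrix, then X admits a tensor eigendecomposition X = Q ⋆ D ⋆ Qᵀ, where Q ∈ ℝ^{N×N×T} is orthogonal with respect to the M-product (Q ⋆ Qᵀ = Qᵀ ⋆ Q = I) and D is f-diagonal (each frontal slice of D ×₃ M is diagonal). -/

import Mathlib

open Finset

/-- The M-transform of an `I × J × T` tensor: `(X ×₃ M)_{ijt} = ∑ₖ M_{tk} X_{ijk}`. -/
def mtransform {I J T : ℕ} (M : Matrix (Fin T) (Fin T) ℝ)
    (X : Fin I → Fin J → Fin T → ℝ) : Fin I → Fin J → Fin T → ℝ :=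
  fun i j t => ∑ k, M t k * X i j k

/-- The facewise product: frontal-slice-wise matrix multiplication. -/
def facewise {I J K T : ℕ} (X : Fin I → Fin J → Fin T → ℝ)
    (Y : Fin J → Fin K → Fin T → ℝ) : Fin I → Fin K → Fin T → ℝ :=
  fun i k t => ∑ j, X i j t * Y j k t

/-- The M-product: `X ⋆ Y = ((X ×₃ M) △ (Y ×₃ M)) ×₃ M⁻¹`. -/
noncomputable def mprod {I J K T : ℕ} (M : Matrix (Fin T) (Fin T) ℝ)
    (X : Fin I → Fin J → Fin T → ℝ) (Y : Fin J → Fin K → Fin T → ℝ) :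
    Fin I → Fin K → Fin T → ℝ :=
  mtransform M⁻¹ (facewise (mtransform M X) (mtransform M Y))

/-- The identity tensor: `I = Î ×₃ M⁻¹` with each frontal slice of `Î` the identity matrix. -/
noncomputable def idTensor {N T : ℕ} (M : Matrix (Fin T) (Fin T) ℝ) : Fin N → Fin N → Fin T → ℝ :=
  mtransform M⁻¹ (fun i j _ => if i = j then (1 : ℝ) else 0)

/-- The tensor transpose: transpose each frontal slice in the transformed domain. -/
noncomputable def ttranspose {I J T : ℕ} (M : Matrix (Fin T) (Fin T) ℝ)
    (X : Fin I → Fin J → Fin T → ℝ) : Fin J → Fin I → Fin T → ℝ :=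
  mtransform M⁻¹ (fun j i t => mtransform M X i j t)

lemma mtransform_mul_eq {I J T : ℕ} (A B : Matrix (Fin T) (Fin T) ℝ)
    (Y : Fin I → Fin J → Fin T → ℝ) :
    mtransform A (mtransform B Y) = mtransform (A * B) Y := by
  funext i j t
  simp only [mtransform, Matrix.mul_apply, Finset.sum_mul, Finset.mul_sum]
  rw [Finset.sum_comm]
  congr 1; ext l; congr 1; ext k; ring

lemma mtransform_one {I J T : ℕ} (Y : Fin I → Fin J → Fin T → ℝ) :
    mtransform 1 Y = Y := by
  funext i j t
  simp [mtransform, Matrix.one_apply, ite_mul]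

/-- If every frontal slice of `X ×₃ M` is symmetric, then `X` admits a tensor
eigendecomposition `X = Q ⋆ D ⋆ Qᵀ` with `Q` M-product orthogonal and `D` f-diagonal. -/
theorem tensor_eigendecomposition {N T : ℕ} (M : Matrix (Fin T) (Fin T) ℝ)
    (hM : IsUnit M.det) (X : Fin N → Fin N → Fin T → ℝ)
    (hX : ∀ i j t, mtransform M X i j t = mtransform M X j i t) :
    ∃ Q D : Fin N → Fin N → Fin T → ℝ,
      X = mprod M (mprod M Q D) (ttranspose M Q) ∧
      mprod M Q (ttranspose M Q) = idTensor M ∧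
      mprod M (ttranspose M Q) Q = idTensor M ∧
      (∀ i j t, i ≠ j → mtransform M D i j t = 0) := by
  have h1 : M * M⁻¹ = 1 := Matrix.mul_nonsing_inv M hM
  have h2 : M⁻¹ * M = 1 := Matrix.nonsing_inv_mul M hM
  have hMM : ∀ {I J : ℕ} (Y : Fin I → Fin J → Fin T → ℝ),
      mtransform M (mtransform M⁻¹ Y) = Y := by
    intro I J Y; rw [mtransform_mul_eq, h1, mtransform_one]
  have hMM' : ∀ {I J : ℕ} (Y : Fin I → Fin J → Fin T → ℝ),
      mtransform M⁻¹ (mtransform M Y) = Y := by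
    intro I J Y; rw [mtransform_mul_eq, h2, mtransform_one]
  set A : Fin T → Matrix (Fin N) (Fin N) ℝ :=
    fun t => Matrix.of (fun i j => mtransform M X i j t) with hAdef
  have hA : ∀ t, (A t).IsHermitian := by
    intro t
    ext i j
    simpa [A, Matrix.conjTranspose_apply] using (hX j i t)
  set Qh : Fin N → Fin N → Fin T → ℝ :=
    fun i j t => ((hA t).eigenvectorUnitary : Matrix (Fin N) (Fin N) ℝ) i j with hQh
  set Dh : Fin N → Fin N → Fin T → ℝ :=
    fun i j t => Matrix.diagonal ((hA t).eigenvalues) i j with hDh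
  refine ⟨mtransform M⁻¹ Qh, mtransform M⁻¹ Dh, ?_, ?_, ?_, ?_⟩
  · -- X = Q ⋆ D ⋆ Qᵀ
    simp only [mprod, ttranspose, hMM]
    conv_lhs => rw [← hMM' X]
    refine congrArg (mtransform M⁻¹) ?_
    funext i k t
    have hs := (hA t).spectral_theorem
    have := congrArg (fun (B : Matrix (Fin N) (Fin N) ℝ) => B i k) hs
    simp only [Unitary.conjStarAlgAut_apply, Matrix.mul_apply, Matrix.conjTranspose_apply, Matrix.star_apply] at this
    simp only [facewise, Qh, Dh]
    convert this using 1 <;> simp [A, RCLike.ofReal_real_eq_id]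
  · -- Q ⋆ Qᵀ = I
    simp only [mprod, ttranspose, idTensor, hMM]
    refine congrArg (mtransform M⁻¹) ?_
    funext i k t
    have hu : ((hA t).eigenvectorUnitary : Matrix (Fin N) (Fin N) ℝ) *
        star ((hA t).eigenvectorUnitary : Matrix (Fin N) (Fin N) ℝ) = 1 :=
      Matrix.mem_unitaryGroup_iff.mp ((hA t).eigenvectorUnitary).2
    have := congrArg (fun (B : Matrix (Fin N) (Fin N) ℝ) => B i k) hu
    simp only [Matrix.mul_apply, Matrix.one_apply, Matrix.star_apply] at this
    simpa [facewise, Qh] using this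
  · -- Qᵀ ⋆ Q = I
    simp only [mprod, ttranspose, idTensor, hMM]
    refine congrArg (mtransform M⁻¹) ?_
    funext i k t
    have hu : star ((hA t).eigenvectorUnitary : Matrix (Fin N) (Fin N) ℝ) *
        ((hA t).eigenvectorUnitary : Matrix (Fin N) (Fin N) ℝ) = 1 :=
      Matrix.mem_unitaryGroup_iff'.mp ((hA t).eigenvectorUnitary).2
    have := congrArg (fun (B : Matrix (Fin N) (Fin N) ℝ) => B i k) hu
    simp only [Matrix.mul_apply, Matrix.one_apply, Matrix.star_apply] at this
    simpa [facewise, Qh] using this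
  · intro i j t hij
    rw [hMM]
    simp [Dh, Matrix.diagonal_apply_ne _ hij]
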